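/- Let n ≥ 1. Let s : ℝ → ℝ satisfy: 0 < s(a) ≤ 1 for every a > 0, s is antitone on (0,∞), and s is convex on (0,∞). Let g : ℝ → ℝ satisfy: 0 < g(t) < 1 for every t > 0, g antitone on (0,∞) and convex on (0,∞). Let v, u, α, β : Fin n → ℝ be positive tuples with (v i − v j)·(α i − α j) ≥ 0 and (u i − u j)·(β i − β j) ≥ 0 for all i, j. Suppose α is weakly supermajorized by β and v is weakly supermajorized by u, i.e. for every k = 1,…,n the sum of the k smallest entries of α (respectively v) is at most the sum of the k smallest entries of β (respectively u). Then ∏_{i=1}^n (1 − g(v i)·s(α i)) ≤ ∏_{i=1}^n (1 − g(u i)·s(β i)). -/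

import Mathlib

open Finset

namespace Stmt4Aux


/-- Chord comparison for concave functions on `(0,∞)`: the slope over `[p,q]`
is at most the slope over `[a,b]` when `a ≤ p` and `b ≤ q`. -/
lemma chord_le {f : ℝ → ℝ} (hf : ConcaveOn ℝ (Set.Ioi 0) f) {a b p q : ℝ}
    (ha : 0 < a) (hp : 0 < p) (hab : a < b) (hpq : p < q) (hap : a ≤ p) (hbq : b ≤ q) :
    (f q - f p) / (q - p) ≤ (f b - f a) / (b - a) := by
  have hb : 0 < b := ha.trans hab
  have hq : 0 < q := hp.trans hpq
  have haq : a < q := lt_of_lt_of_le hab hbq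
  have h1 : (f q - f a) / (q - a) ≤ (f b - f a) / (b - a) := by
    rcases eq_or_lt_of_le hbq with rfl | hbq'
    · exact le_refl _
    · have h := hf.neg.secant_mono_aux2 (Set.mem_Ioi.mpr ha) (Set.mem_Ioi.mpr hq) hab hbq'
      simp only [Pi.neg_apply] at h
      have e1 : (-f b - -f a) / (b - a) = -((f b - f a) / (b - a)) := by
        rw [show -f b - -f a = -(f b - f a) by ring, neg_div]
      have e2 : (-f q - -f a) / (q - a) = -((f q - f a) / (q - a)) := by
        rw [show -f q - -f a = -(f q - f a) by ring, neg_div]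
      rw [e1, e2] at h
      linarith
  have h2 : (f q - f p) / (q - p) ≤ (f q - f a) / (q - a) := by
    rcases eq_or_lt_of_le hap with rfl | hap'
    · exact le_refl _
    · have h := hf.neg.secant_mono_aux3 (Set.mem_Ioi.mpr ha) (Set.mem_Ioi.mpr hq) hap' hpq
      simp only [Pi.neg_apply] at h
      have e1 : (-f q - -f a) / (q - a) = -((f q - f a) / (q - a)) := by
        rw [show -f q - -f a = -(f q - f a) by ring, neg_div]
      have e2 : (-f q - -f p) / (q - p) = -((f q - f p) / (q - p)) := by
        rw [show -f q - -f p = -(f q - f p) by ring, neg_div]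
      rw [e1, e2] at h
      linarith
  exact h2.trans h1

/-- `x ↦ log (1 - c * F x)` is monotone on `(0,∞)` when `F` is antitone. -/
lemma mono_logOneSub {F : ℝ → ℝ} (hF_anti : AntitoneOn F (Set.Ioi 0)) {c : ℝ} (hc : 0 < c)
    (hlt : ∀ x > 0, c * F x < 1) :
    MonotoneOn (fun x => Real.log (1 - c * F x)) (Set.Ioi 0) := by
  intro x hx y hy hxy
  have hx' : (0:ℝ) < x := hx
  have h1 : 0 < 1 - c * F x := by have := hlt x hx'; linarith
  have h2 : F y ≤ F x := hF_anti hx hy hxy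
  have h3 : c * F y ≤ c * F x := by nlinarith
  exact Real.log_le_log h1 (by linarith)

/-- `x ↦ log (1 - c * F x)` is concave on `(0,∞)` when `F` is convex and positive. -/
lemma concave_logOneSub {F : ℝ → ℝ} (hF_conv : ConvexOn ℝ (Set.Ioi 0) F)
    (hFpos : ∀ x > 0, 0 < F x) {c : ℝ} (hc : 0 < c)
    (hlt : ∀ x > 0, c * F x < 1) :
    ConcaveOn ℝ (Set.Ioi 0) (fun x => Real.log (1 - c * F x)) := by
  refine ⟨convex_Ioi 0, ?_⟩
  intro x hx y hy a b ha hb hab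
  have hx' : (0:ℝ) < x := hx
  have hy' : (0:ℝ) < y := hy
  have hxy : (0:ℝ) < a * x + b * y := by
    have := (convex_Ioi (0:ℝ)) hx hy ha hb hab
    simpa using this
  have hP : 0 < 1 - c * F x := by have := hlt x hx'; linarith
  have hQ : 0 < 1 - c * F y := by have := hlt y hy'; linarith
  have hPQ : 0 < a * (1 - c * F x) + b * (1 - c * F y) := by
    rcases eq_or_lt_of_le ha with rfl | ha'
    · simp only [zero_mul, zero_add] at hab ⊢
      nlinarith
    · nlinarith [mul_pos ha' hP, mul_nonneg hb hQ.le]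
  have key1 : a • Real.log (1 - c * F x) + b • Real.log (1 - c * F y)
      ≤ Real.log (a • (1 - c * F x) + b • (1 - c * F y)) :=
    (strictConcaveOn_log_Ioi.concaveOn).2 (Set.mem_Ioi.mpr hP) (Set.mem_Ioi.mpr hQ) ha hb hab
  have key2 : Real.log (a • (1 - c * F x) + b • (1 - c * F y))
      ≤ Real.log (1 - c * F (a • x + b • y)) := by
    have hsc : F (a * x + b * y) ≤ a * F x + b * F y := by
      have := hF_conv.2 hx hy ha hb hab
      simpa [smul_eq_mul] using this
    simp only [smul_eq_mul]
    apply Real.log_le_log hPQ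
    nlinarith
  calc a • Real.log (1 - c * F x) + b • Real.log (1 - c * F y)
      ≤ Real.log (a • (1 - c * F x) + b • (1 - c * F y)) := key1
    _ ≤ Real.log (1 - c * F (a • x + b • y)) := key2

/-- Chord domination (submodularity): for `c' ≤ c`, increments of
`log (1 - c' * F ·)` dominate those of `log (1 - c * F ·)`. -/
lemma sub_logOneSub {F : ℝ → ℝ} (hF_anti : AntitoneOn F (Set.Ioi 0))
    (hFpos : ∀ x > 0, 0 < F x) {c c' : ℝ} (hc' : 0 < c') (hcc : c' ≤ c)
    (hlt : ∀ x > 0, c * F x < 1) {p q : ℝ} (hp : 0 < p) (hpq : p < q) :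
    Real.log (1 - c' * F q) - Real.log (1 - c' * F p)
      ≤ Real.log (1 - c * F q) - Real.log (1 - c * F p) := by
  have hq : 0 < q := hp.trans hpq
  have hc : 0 < c := lt_of_lt_of_le hc' hcc
  have hFq : 0 < F q := hFpos q hq
  have hFp : 0 < F p := hFpos p hp
  have hD : 0 < 1 - c * F p := by have := hlt p hp; linarith
  have hC : 0 < 1 - c * F q := by have := hlt q hq; linarith
  have hB : 0 < 1 - c' * F p := by nlinarith
  have hA : 0 < 1 - c' * F q := by nlinarith
  have hFpq : F q ≤ F p := hF_anti (Set.mem_Ioi.mpr hp) (Set.mem_Ioi.mpr hq) hpq.le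
  have key : (1 - c' * F q) * (1 - c * F p) ≤ (1 - c * F q) * (1 - c' * F p) := by nlinarith
  rw [sub_le_sub_iff, ← Real.log_mul hA.ne' hD.ne', ← Real.log_mul hC.ne' hB.ne']
  exact Real.log_le_log (by positivity) key


lemma sum_filter_range {n : ℕ} (d : Fin n → ℝ) :
    ∀ k, k ≤ n → ∑ i ∈ univ.filter (fun i : Fin n => (i : ℕ) < k), d i
      = ∑ m ∈ range k, (if h : m < n then d ⟨m, h⟩ else 0) := by
  intro k
  induction k with
  | zero => intro _; simp
  | succ k ih =>
    intro hk
    have hk' : k ≤ n := Nat.le_of_succ_le hk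
    have hkn : k < n := hk
    rw [Finset.sum_range_succ, ← ih hk', dif_pos hkn]
    have hins : univ.filter (fun i : Fin n => (i : ℕ) < k + 1)
        = insert (⟨k, hkn⟩ : Fin n) (univ.filter (fun i : Fin n => (i : ℕ) < k)) := by
      ext i
      simp only [Finset.mem_filter, Finset.mem_univ, true_and, Finset.mem_insert, Fin.ext_iff]
      omega
    rw [hins, Finset.sum_insert (by simp)]
    ring

lemma abel_main {n : ℕ} (hn : 1 ≤ n) (f : Fin n → ℝ → ℝ) (x y : Fin n → ℝ)
    (hx : ∀ i, 0 < x i) (hy : ∀ i, 0 < y i)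
    (hxm : Monotone x) (hym : Monotone y)
    (hconc : ∀ i, ConcaveOn ℝ (Set.Ioi 0) (f i))
    (hmono : ∀ i, MonotoneOn (f i) (Set.Ioi 0))
    (hsub : ∀ i j : Fin n, i ≤ j → ∀ p q : ℝ, 0 < p → p < q → f j q - f j p ≤ f i q - f i p)
    (hmaj : ∀ k, k ≤ n → ∑ i ∈ univ.filter (fun i : Fin n => (i : ℕ) < k), x i
      ≤ ∑ i ∈ univ.filter (fun i : Fin n => (i : ℕ) < k), y i) :
    ∑ i, f i (x i) ≤ ∑ i, f i (y i) := by
  have hne : (univ : Finset (Fin n)).Nonempty := ⟨⟨0, hn⟩, mem_univ _⟩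
  set δ := univ.inf' hne (fun i => if y i < x i then x i - y i else 1) with hδdef
  have hδpos : 0 < δ := by
    rw [hδdef, Finset.lt_inf'_iff]
    intro i _
    split
    · next h => linarith
    · norm_num
  have hδle : ∀ i, y i < x i → δ ≤ x i - y i := by
    intro i h
    have h2 := Finset.inf'_le (fun i => if y i < x i then x i - y i else 1) (Finset.mem_univ i)
    rw [if_pos h] at h2
    exact h2
  set c := fun i => max (x i) (y i + δ) with hcdef
  have hyc : ∀ i, y i < c i := fun i => lt_of_lt_of_le (by linarith) (le_max_right _ _)
  have hc0 : ∀ i, 0 < c i := fun i => (hy i).trans (hyc i)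
  have hcm : ∀ i j : Fin n, i ≤ j → c i ≤ c j := by
    intro i j h
    exact max_le_max (hxm h) (by have := hym h; linarith)
  have hceq : ∀ i, y i < x i → c i = x i := by
    intro i h
    exact max_eq_left (by have := hδle i h; linarith)
  set t := fun i => (f i (c i) - f i (y i)) / (c i - y i) with htdef
  have ht0 : ∀ i, 0 ≤ t i := by
    intro i
    apply div_nonneg _ (by have := hyc i; linarith)
    have := hmono i (Set.mem_Ioi.mpr (hy i)) (Set.mem_Ioi.mpr (hc0 i)) (hyc i).le
    linarith
  have htanti : ∀ i j : Fin n, i ≤ j → t j ≤ t i := by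
    intro i j hij
    have hnum : f j (c j) - f j (y j) ≤ f i (c j) - f i (y j) :=
      hsub i j hij (y j) (c j) (hy j) (hyc j)
    have hd : 0 < c j - y j := by have := hyc j; linarith
    have h1 : t j ≤ (f i (c j) - f i (y j)) / (c j - y j) := (div_le_div_iff_of_pos_right hd).mpr hnum
    have h2 : (f i (c j) - f i (y j)) / (c j - y j) ≤ t i :=
      chord_le (hconc i) (hy i) (hy j) (hyc i) (hyc j) (hym hij) (hcm i j hij)
    exact h1.trans h2
  have hA : ∀ i, f i (x i) + t i * (y i - x i) ≤ f i (y i) := by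
    intro i
    rcases lt_trichotomy (x i) (y i) with h | h | h
    · have hs : t i ≤ (f i (y i) - f i (x i)) / (y i - x i) :=
        chord_le (hconc i) (hx i) (hy i) h (hyc i) h.le (hyc i).le
      have hyx : 0 < y i - x i := by linarith
      have := (le_div_iff₀ hyx).mp hs
      linarith
    · rw [h]; simp
    · have hci := hceq i h
      have hd : 0 < c i - y i := by have := hyc i; linarith
      have hxyne : x i - y i ≠ 0 := by linarith
      have ht : t i * (y i - x i) = -(f i (x i) - f i (y i)) := by
        rw [htdef]
        simp only
        rw [hci, show y i - x i = -(x i - y i) by ring, mul_neg,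
          div_mul_cancel₀ _ hxyne]
      linarith [ht.le, ht.ge]
  have hsum1 : ∑ i, f i (x i) + ∑ i, t i * (y i - x i) ≤ ∑ i, f i (y i) := by
    rw [← Finset.sum_add_distrib]
    exact Finset.sum_le_sum fun i _ => hA i
  -- Abel summation: show the correction term is nonnegative
  set T : ℕ → ℝ := fun m => if h : m < n then t ⟨m, h⟩ else 0 with hTdef
  set D : ℕ → ℝ := fun m => if h : m < n then y ⟨m, h⟩ - x ⟨m, h⟩ else 0 with hDdef
  have hconv : ∑ i : Fin n, t i * (y i - x i) = ∑ m ∈ range n, T m * D m := by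
    rw [← Fin.sum_univ_eq_sum_range (fun m => T m * D m) n]
    apply Finset.sum_congr rfl
    intro i _
    simp [hTdef, hDdef, i.isLt]
  have hG : ∀ k, k ≤ n → 0 ≤ ∑ m ∈ range k, D m := by
    intro k hk
    have hD : ∀ m, D m = (if h : m < n then y ⟨m, h⟩ else 0) - (if h : m < n then x ⟨m, h⟩ else 0) := by
      intro m
      rw [hDdef]
      by_cases hmn : m < n <;> simp [hmn]
    simp_rw [hD, Finset.sum_sub_distrib]
    rw [← sum_filter_range y k hk, ← sum_filter_range x k hk]
    linarith [hmaj k hk]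
  have habel : 0 ≤ ∑ i : Fin n, t i * (y i - x i) := by
    rw [hconv]
    have hbp := Finset.sum_range_by_parts T D n
    simp only [smul_eq_mul] at hbp
    rw [hbp]
    have hn1 : n - 1 < n := by omega
    have h1 : 0 ≤ T (n - 1) * ∑ m ∈ range n, D m := by
      apply mul_nonneg _ (hG n le_rfl)
      rw [hTdef]; simp only [dif_pos hn1]; exact ht0 _
    have h2 : ∑ i ∈ range (n - 1), (T (i + 1) - T i) * ∑ m ∈ range (i + 1), D m ≤ 0 := by
      apply Finset.sum_nonpos
      intro i hi
      rw [Finset.mem_range] at hi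
      have hi1 : i + 1 < n := by omega
      have hii : i < n := by omega
      apply mul_nonpos_of_nonpos_of_nonneg
      · rw [hTdef]
        simp only [dif_pos hi1, dif_pos hii]
        have := htanti ⟨i, hii⟩ ⟨i + 1, hi1⟩ (by simp [Fin.mk_le_mk])
        linarith
      · exact hG (i + 1) (by omega)
    linarith
  linarith

lemma exists_sort_pair {n : ℕ} (α v : Fin n → ℝ)
    (hsim : ∀ i j, 0 ≤ (v i - v j) * (α i - α j)) :
    ∃ σ : Equiv.Perm (Fin n), Monotone (α ∘ σ) ∧ Monotone (v ∘ σ) ∧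
      α ∘ σ = α ∘ Tuple.sort α ∧ v ∘ σ = v ∘ Tuple.sort v := by
  classical
  set Fp : Fin n → ℝ ×ₗ ℝ := fun i => toLex (α i, v i) with hFp
  set σ := Tuple.sort Fp with hσ
  have hFσ : Monotone (Fp ∘ σ) := Tuple.monotone_sort Fp
  have haσ : Monotone (α ∘ σ) := by
    intro i j hij
    have h := hFσ hij
    simp only [Function.comp_apply, hFp] at h
    rw [Prod.Lex.le_iff] at h
    rcases h with h | h
    · exact h.le
    · exact h.1.le
  have hvσ : Monotone (v ∘ σ) := by
    intro i j hij
    have h := hFσ hij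
    simp only [Function.comp_apply, hFp] at h
    rw [Prod.Lex.le_iff] at h
    simp only [ofLex_toLex] at h
    rcases h with h | h
    · simp only [Function.comp_apply]
      by_contra hc
      push_neg at hc
      have := hsim (σ i) (σ j)
      nlinarith
    · exact h.2
  exact ⟨σ, haσ, hvσ, Tuple.comp_sort_eq_comp_iff_monotone.mpr haσ,
    Tuple.comp_sort_eq_comp_iff_monotone.mpr hvσ⟩

end Stmt4Aux

/-- Sum of the `k` smallest entries of the tuple `a`. -/
noncomputable def kSmallestSum {n : ℕ} (a : Fin n → ℝ) (k : ℕ) : ℝ :=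
  ∑ i ∈ Finset.univ.filter (fun i : Fin n => (i : ℕ) < k), a (Tuple.sort a i)

namespace Stmt4Aux

lemma kSmall_eq {n k : ℕ} (α : Fin n → ℝ) (σ : Equiv.Perm (Fin n))
    (h : α ∘ σ = α ∘ Tuple.sort α) :
    kSmallestSum α k = ∑ i ∈ univ.filter (fun i : Fin n => (i : ℕ) < k), (α ∘ σ) i := by
  simp only [kSmallestSum]
  exact Finset.sum_congr rfl fun i _ => (congrFun h i).symm

end Stmt4Aux

open Stmt4Aux in
/-- Theorem 3.4: largest claim amounts, fixed number of claims,
usual stochastic order under row weak majorization. -/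
theorem stmt_4 {n : ℕ} (hn : 1 ≤ n) (s g : ℝ → ℝ)
    (hs_pos : ∀ a > 0, 0 < s a) (hs_le : ∀ a > 0, s a ≤ 1)
    (hs_anti : AntitoneOn s (Set.Ioi 0))
    (hs_conv : ConvexOn ℝ (Set.Ioi 0) s)
    (hg : ∀ t > 0, 0 < g t ∧ g t < 1)
    (hg_anti : AntitoneOn g (Set.Ioi 0))
    (hg_conv : ConvexOn ℝ (Set.Ioi 0) g)
    (v u α β : Fin n → ℝ)
    (hv : ∀ i, 0 < v i) (hu : ∀ i, 0 < u i)
    (hα : ∀ i, 0 < α i) (hβ : ∀ i, 0 < β i)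
    (hsimv : ∀ i j, 0 ≤ (v i - v j) * (α i - α j))
    (hsimu : ∀ i j, 0 ≤ (u i - u j) * (β i - β j))
    (hmajα : ∀ k, 1 ≤ k → k ≤ n → kSmallestSum α k ≤ kSmallestSum β k)
    (hmajv : ∀ k, 1 ≤ k → k ≤ n → kSmallestSum v k ≤ kSmallestSum u k) :
    ∏ i, (1 - g (v i) * s (α i)) ≤ ∏ i, (1 - g (u i) * s (β i)) := by
  classical
  obtain ⟨σ, haσ, hwσ, hαeq, hveq⟩ := exists_sort_pair α v hsimv
  obtain ⟨τ, hbτ, hzτ, hβeq, hueq⟩ := exists_sort_pair β u hsimu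
  set a := α ∘ σ with hadef
  set w := v ∘ σ with hwdef
  set b := β ∘ τ with hbdef
  set z := u ∘ τ with hzdef
  have hai : ∀ i, 0 < a i := fun i => hα _
  have hwi : ∀ i, 0 < w i := fun i => hv _
  have hbi : ∀ i, 0 < b i := fun i => hβ _
  have hzi : ∀ i, 0 < z i := fun i => hu _
  -- basic factor bounds
  have hfact : ∀ w' x : ℝ, 0 < w' → 0 < x → 0 < 1 - g w' * s x := by
    intro w' x hw hx
    obtain ⟨h1, h2⟩ := hg w' hw
    have h3 := hs_pos x hx
    have h4 := hs_le x hx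
    nlinarith
  have hltA : ∀ w' : ℝ, 0 < w' → ∀ x > 0, g w' * s x < 1 := by
    intro w' hw x hx
    obtain ⟨h1, h2⟩ := hg w' hw
    have h3 := hs_pos x hx
    have h4 := hs_le x hx
    nlinarith
  have hltB : ∀ b' : ℝ, 0 < b' → ∀ x > 0, s b' * g x < 1 := by
    intro b' hb x hx
    obtain ⟨h1, h2⟩ := hg x hx
    have h3 := hs_pos b' hb
    have h4 := hs_le b' hb
    nlinarith
  -- majorization hypotheses for the sorted tuples
  have hmaj1 : ∀ k, k ≤ n → ∑ i ∈ univ.filter (fun i : Fin n => (i : ℕ) < k), a i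
      ≤ ∑ i ∈ univ.filter (fun i : Fin n => (i : ℕ) < k), b i := by
    intro k hk
    rcases Nat.eq_zero_or_pos k with rfl | hk1
    · simp
    · rw [hadef, hbdef, ← kSmall_eq α σ hαeq, ← kSmall_eq β τ hβeq]
      exact hmajα k hk1 hk
  have hmaj2 : ∀ k, k ≤ n → ∑ i ∈ univ.filter (fun i : Fin n => (i : ℕ) < k), w i
      ≤ ∑ i ∈ univ.filter (fun i : Fin n => (i : ℕ) < k), z i := by
    intro k hk
    rcases Nat.eq_zero_or_pos k with rfl | hk1
    · simp
    · rw [hwdef, hzdef, ← kSmall_eq v σ hveq, ← kSmall_eq u τ hueq]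
      exact hmajv k hk1 hk
  -- Step A : move α to β with v fixed
  have stepA : ∑ i, Real.log (1 - g (w i) * s (a i))
      ≤ ∑ i, Real.log (1 - g (w i) * s (b i)) := by
    apply abel_main hn (fun i p => Real.log (1 - g (w i) * s p)) a b hai hbi haσ hbτ
    · intro i
      exact concave_logOneSub hs_conv hs_pos (hg (w i) (hwi i)).1
        (hltA (w i) (hwi i))
    · intro i
      exact mono_logOneSub hs_anti (hg (w i) (hwi i)).1
        (hltA (w i) (hwi i))
    · intro i j hij p q hp hpq
      exact sub_logOneSub hs_anti hs_pos (hg (w j) (hwi j)).1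
        (hg_anti (Set.mem_Ioi.mpr (hwi i)) (Set.mem_Ioi.mpr (hwi j)) (hwσ hij))
        (hltA (w i) (hwi i)) hp hpq
    · exact hmaj1
  -- Step B : move v to u with β fixed
  have stepB : ∑ i, Real.log (1 - s (b i) * g (w i))
      ≤ ∑ i, Real.log (1 - s (b i) * g (z i)) := by
    apply abel_main hn (fun i p => Real.log (1 - s (b i) * g p)) w z hwi hzi hwσ hzτ
    · intro i
      exact concave_logOneSub hg_conv (fun x hx => (hg x hx).1) (hs_pos (b i) (hbi i))
        (hltB (b i) (hbi i))
    · intro i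
      exact mono_logOneSub hg_anti (hs_pos (b i) (hbi i))
        (hltB (b i) (hbi i))
    · intro i j hij p q hp hpq
      exact sub_logOneSub hg_anti (fun x hx => (hg x hx).1) (hs_pos (b j) (hbi j))
        (hs_anti (Set.mem_Ioi.mpr (hbi i)) (Set.mem_Ioi.mpr (hbi j)) (hbτ hij))
        (hltB (b i) (hbi i)) hp hpq
    · exact hmaj2
  -- rewrite products via the permutations
  have hprod1 : ∏ i, (1 - g (v i) * s (α i)) = ∏ i, (1 - g (w i) * s (a i)) :=
    (Equiv.prod_comp σ (fun i => 1 - g (v i) * s (α i))).symm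
  have hprod2 : ∏ i, (1 - g (u i) * s (β i)) = ∏ i, (1 - g (z i) * s (b i)) :=
    (Equiv.prod_comp τ (fun i => 1 - g (u i) * s (β i))).symm
  rw [hprod1, hprod2]
  have hp1 : ∀ i : Fin n, (0:ℝ) < 1 - g (w i) * s (a i) :=
    fun i => hfact _ _ (hwi i) (hai i)
  have hp2 : ∀ i : Fin n, (0:ℝ) < 1 - g (z i) * s (b i) :=
    fun i => hfact _ _ (hzi i) (hbi i)
  have hP1 : (0:ℝ) < ∏ i, (1 - g (w i) * s (a i)) := Finset.prod_pos fun i _ => hp1 i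
  have hP2 : (0:ℝ) < ∏ i, (1 - g (z i) * s (b i)) := Finset.prod_pos fun i _ => hp2 i
  rw [← Real.log_le_log_iff hP1 hP2,
    Real.log_prod (fun i _ => (hp1 i).ne'),
    Real.log_prod (fun i _ => (hp2 i).ne')]
  calc ∑ i, Real.log (1 - g (w i) * s (a i))
      ≤ ∑ i, Real.log (1 - g (w i) * s (b i)) := stepA
    _ = ∑ i, Real.log (1 - s (b i) * g (w i)) := by
        exact Finset.sum_congr rfl fun i _ => by rw [mul_comm]
    _ ≤ ∑ i, Real.log (1 - s (b i) * g (z i)) := stepB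
    _ = ∑ i, Real.log (1 - g (z i) * s (b i)) := by
        exact Finset.sum_congr rfl fun i _ => by rw [mul_comm]
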